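/- Let p = (p_1, …, p_n) be a weakly increasing sequence of positive integers having r distinct values, where the value i occurs exactly m_i times (so n = m_1 + ⋯ + m_r). Then the sum of t^{inv(w)} over all rearrangements w of p (as a multiset word) equals the t-multinomial coefficient [n choose m_1, …, m_r]_t, where inv(w) = #{(i,j) : i < j and w_i > w_j}. -/

import Mathlib

/-- inversion number of a word: pairs i < j with w_i > w_j. -/
def invCount (w : List ℕ) : ℕ :=
  ((Finset.range w.length ×ˢ Finset.range w.length).filter
    (fun ij => ij.1 < ij.2 ∧ w.getD ij.2 0 < w.getD ij.1 0)).card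

/-- t-factorial `[k]_t!` as a polynomial in `t = X`. -/
noncomputable def qFact : ℕ → Polynomial ℕ
  | 0 => 1
  | (k+1) => qFact k * ∑ i ∈ Finset.range (k+1), Polynomial.X ^ i




open Finset Polynomial

lemma invCount_eq_sum (w : List ℕ) :
    invCount w = ∑ i ∈ range w.length, ∑ j ∈ range w.length,
      if i < j ∧ w.getD j 0 < w.getD i 0 then 1 else 0 := by
  rw [invCount, Finset.card_filter, Finset.sum_product]

lemma countP_eq_sum (q : ℕ → Bool) (l : List ℕ) :
    l.countP q = ∑ j ∈ range l.length, if q (l.getD j 0) then 1 else 0 := by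
  induction l with
  | nil => simp
  | cons a l ih =>
    rw [List.countP_cons, List.length_cons, Finset.sum_range_succ']
    simp [ih]

lemma invCount_cons (a : ℕ) (l : List ℕ) :
    invCount (a :: l) = l.countP (fun b => decide (b < a)) + invCount l := by
  rw [invCount_eq_sum, invCount_eq_sum, countP_eq_sum, List.length_cons,
    Finset.sum_range_succ']
  have h0 : (∑ j ∈ range (l.length + 1),
      if 0 < j ∧ (a :: l).getD j 0 < (a :: l).getD 0 0 then 1 else 0)
      = ∑ j ∈ range l.length, if decide (l.getD j 0 < a) = true then 1 else 0 := by
    rw [Finset.sum_range_succ']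
    simp
  have h1 : ∀ i ∈ range l.length, (∑ j ∈ range (l.length + 1),
      if i + 1 < j ∧ (a :: l).getD j 0 < (a :: l).getD (i+1) 0 then 1 else 0)
      = ∑ j ∈ range l.length, if i < j ∧ l.getD j 0 < l.getD i 0 then 1 else 0 := by
    intro i _
    rw [Finset.sum_range_succ']
    simp [Nat.succ_lt_succ_iff]
  rw [Finset.sum_congr rfl h1, h0, add_comm]

/-- countP (≤ a) = countP (< a) + count a -/
lemma countP_le_split (a : ℕ) (p : List ℕ) :
    p.countP (fun x => decide (x ≤ a)) = p.countP (fun x => decide (x < a)) + p.count a := by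
  induction p with
  | nil => simp
  | cons b l ih =>
    rw [List.countP_cons, List.countP_cons, List.count_cons, ih]
    simp only [decide_eq_true_eq, beq_iff_eq]
    split_ifs <;> omega

lemma disj (p : List ℕ) :
    (↑p.toFinset : Set ℕ).PairwiseDisjoint
      (fun a => Finset.Ico (p.countP (fun x => decide (x < a)))
        (p.countP (fun x => decide (x < a)) + p.count a)) := by
  have key : ∀ a b : ℕ, a < b →
      Disjoint (Finset.Ico (p.countP (fun x => decide (x < a)))
        (p.countP (fun x => decide (x < a)) + p.count a))
        (Finset.Ico (p.countP (fun x => decide (x < b)))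
        (p.countP (fun x => decide (x < b)) + p.count b)) := by
    intro a b h
    apply Finset.disjoint_left.2
    intro k hk1 hk2
    simp only [Finset.mem_Ico] at hk1 hk2
    have hkey : p.countP (fun x => decide (x < a)) + p.count a ≤ p.countP (fun x => decide (x < b)) := by
      rw [← countP_le_split]
      exact List.countP_mono_left (fun x _ hx => by simp_all; omega)
    omega
  intro a _ b _ hab
  rcases hab.lt_or_gt with h | h
  · exact key a b h
  · exact (key b a h).symm

lemma cover (p : List ℕ) :
    p.toFinset.biUnion (fun a => Finset.Ico (p.countP (fun x => decide (x < a)))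
        (p.countP (fun x => decide (x < a)) + p.count a)) = Finset.range p.length := by
  ext k
  simp only [Finset.mem_biUnion, Finset.mem_Ico, Finset.mem_range, List.mem_toFinset]
  constructor
  · rintro ⟨a, _, _, hk2⟩
    have := List.countP_le_length (p := fun x => decide (x ≤ a)) (l := p)
    rw [countP_le_split] at this
    omega
  · intro hk
    have hne : p.toFinset.Nonempty := by
      rcases p with _ | ⟨x, l⟩
      · simp at hk
      · exact ⟨x, by simp⟩
    set F := p.toFinset.filter (fun b => k < p.countP (fun x => decide (x ≤ b))) with hF
    have hFne : F.Nonempty := by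
      refine ⟨p.toFinset.max' hne, Finset.mem_filter.2 ⟨p.toFinset.max'_mem hne, ?_⟩⟩
      have : p.countP (fun x => decide (x ≤ p.toFinset.max' hne)) = p.length := by
        rw [List.countP_eq_length]
        intro x hx
        simpa using p.toFinset.le_max' x (List.mem_toFinset.2 hx)
      omega
    set a := F.min' hFne with ha
    have haF : a ∈ F := F.min'_mem hFne
    rw [hF, Finset.mem_filter, List.mem_toFinset] at haF
    refine ⟨a, haF.1, ?_, by rw [← countP_le_split]; exact haF.2⟩
    by_contra hcon
    push_neg at hcon
    have hpos : 0 < p.countP (fun x => decide (x < a)) := by omega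
    rw [List.countP_pos_iff] at hpos
    obtain ⟨x0, hx0p, hx0a⟩ := hpos
    set G := p.toFinset.filter (fun x => (decide (x < a) : Prop)) with hG
    have hGne : G.Nonempty := ⟨x0, Finset.mem_filter.2 ⟨List.mem_toFinset.2 hx0p, hx0a⟩⟩
    set b := G.max' hGne with hb
    have hbG : b ∈ G := G.max'_mem hGne
    rw [hG, Finset.mem_filter, List.mem_toFinset] at hbG
    have hba : b < a := by simpa using hbG.2
    have hmono : p.countP (fun x => decide (x < a)) ≤ p.countP (fun x => decide (x ≤ b)) := by
      apply List.countP_mono_left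
      intro x hx hxa
      have hxG : x ∈ G := Finset.mem_filter.2 ⟨List.mem_toFinset.2 hx, hxa⟩
      simpa using G.le_max' x hxG
    have hbF : b ∈ F := Finset.mem_filter.2 ⟨List.mem_toFinset.2 hbG.1, by omega⟩
    have := F.min'_le b hbF
    omega


lemma sum_perms_head (p : List ℕ) (hp : p ≠ []) (f : List ℕ → Polynomial ℕ) :
    ∑ w ∈ p.permutations.toFinset, f w
      = ∑ a ∈ p.toFinset, ∑ w ∈ (p.erase a).permutations.toFinset, f (a :: w) := by
  rw [Finset.sum_sigma']
  apply Finset.sum_nbij' (i := fun w => (⟨w.head!, w.tail⟩ : Σ _ : ℕ, List ℕ))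
    (j := fun x => x.1 :: x.2)
  · intro w hw
    rw [List.mem_toFinset, List.mem_permutations] at hw
    have hwne : w ≠ [] := by
      intro h; subst h; exact hp hw.symm.eq_nil
    have hcons : w.head! :: w.tail = w := List.cons_head!_tail hwne
    rw [← hcons] at hw
    rw [List.cons_perm_iff_perm_erase] at hw
    simp only [Finset.mem_sigma, List.mem_toFinset, List.mem_permutations]
    exact ⟨hw.1, hw.2⟩
  · intro x hx
    simp only [Finset.mem_sigma, List.mem_toFinset, List.mem_permutations] at hx
    rw [List.mem_toFinset, List.mem_permutations, List.cons_perm_iff_perm_erase]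
    exact hx
  · intro w hw
    rw [List.mem_toFinset, List.mem_permutations] at hw
    have hwne : w ≠ [] := by
      intro h; subst h; exact hp hw.symm.eq_nil
    exact List.cons_head!_tail hwne
  · intro x _
    rfl
  · intro w hw
    rw [List.mem_toFinset, List.mem_permutations] at hw
    have hwne : w ≠ [] := by
      intro h; subst h; exact hp hw.symm.eq_nil
    rw [List.cons_head!_tail hwne]

lemma qFact_succ (k : ℕ) :
    qFact (k+1) = qFact k * ∑ i ∈ Finset.range (k+1), Polynomial.X ^ i := qFact.eq_2 k

/-- splitting the factor at `a` out of the product of q-factorials -/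
lemma prod_qFact_erase (p : List ℕ) (a : ℕ) (ha : a ∈ p) :
    ∏ i ∈ p.toFinset, qFact (p.count i)
      = (∑ j ∈ Finset.range (p.count a), Polynomial.X ^ j) *
        ∏ i ∈ p.toFinset, qFact ((p.erase a).count i) := by
  have hmem := List.mem_toFinset.2 ha
  rw [← Finset.mul_prod_erase _ _ hmem, ← Finset.mul_prod_erase _ (fun i => qFact ((p.erase a).count i)) hmem]
  have h1 : ∀ i ∈ p.toFinset.erase a, qFact (p.count i) = qFact ((p.erase a).count i) := by
    intro i hi
    rw [List.count_erase_of_ne (Finset.ne_of_mem_erase hi)]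
  rw [Finset.prod_congr rfl h1]
  have hcnt : (p.erase a).count a = p.count a - 1 := List.count_erase_self (a := a) (l := p)
  have hpos : 0 < p.count a := List.count_pos_iff.2 ha
  have h2 : qFact (p.count a) = qFact (p.count a - 1) * ∑ j ∈ Finset.range (p.count a), Polynomial.X ^ j := by
    conv_lhs => rw [show p.count a = (p.count a - 1) + 1 by omega]
    rw [qFact_succ, Nat.sub_add_cancel hpos]
  rw [hcnt, h2]
  ring

lemma prod_count_erase_toFinset (p : List ℕ) (a : ℕ) (ha : a ∈ p) :
    ∏ i ∈ p.toFinset, qFact ((p.erase a).count i)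
      = ∏ i ∈ (p.erase a).toFinset, qFact ((p.erase a).count i) := by
  refine (Finset.prod_subset ?_ ?_).symm
  · intro i hi
    rw [List.mem_toFinset] at *
    exact (p.erase_subset (a := a)) hi
  · intro i _ hi
    rw [List.mem_toFinset] at hi
    rw [List.count_eq_zero.2 hi]
    exact qFact.eq_1

lemma sum_X_interval (p : List ℕ) :
    ∑ a ∈ p.toFinset, (Polynomial.X : Polynomial ℕ) ^ (p.countP (fun x => decide (x < a))) *
        ∑ j ∈ Finset.range (p.count a), Polynomial.X ^ j
      = ∑ k ∈ Finset.range p.length, (Polynomial.X : Polynomial ℕ) ^ k := by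
  rw [← cover p, Finset.sum_biUnion (disj p)]
  apply Finset.sum_congr rfl
  intro a _
  rw [Finset.sum_Ico_eq_sum_range, Nat.add_sub_cancel_left, Finset.mul_sum]
  exact Finset.sum_congr rfl (fun k _ => (pow_add _ _ _).symm)

lemma key (n : ℕ) : ∀ p : List ℕ, p.length = n →
    (∑ w ∈ p.permutations.toFinset, (Polynomial.X : Polynomial ℕ) ^ invCount w) *
      ∏ i ∈ p.toFinset, qFact (p.count i) = qFact p.length := by
  induction n with
  | zero =>
    intro p hp
    rw [List.length_eq_zero_iff] at hp; subst hp
    rw [List.permutations_nil]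
    simp [invCount]
    rfl
  | succ n ih =>
    intro p hp
    have hpne : p ≠ [] := by intro h; subst h; simp at hp
    rw [sum_perms_head p hpne]
    have hstep : ∀ a ∈ p.toFinset,
        (∑ w ∈ (p.erase a).permutations.toFinset, (Polynomial.X : Polynomial ℕ) ^ invCount (a :: w))
          = Polynomial.X ^ (p.countP (fun x => decide (x < a))) *
            ∑ w ∈ (p.erase a).permutations.toFinset, Polynomial.X ^ invCount w := by
      intro a ha
      rw [Finset.mul_sum]
      apply Finset.sum_congr rfl
      intro w hw
      rw [List.mem_toFinset, List.mem_permutations] at hw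
      rw [invCount_cons, pow_add]
      have h1 : w.countP (fun b => decide (b < a)) = (p.erase a).countP (fun b => decide (b < a)) :=
        hw.countP_eq _
      have h2 : p.countP (fun b => decide (b < a)) = (p.erase a).countP (fun b => decide (b < a)) := by
        have hperm := List.perm_cons_erase (List.mem_toFinset.1 ha)
        rw [hperm.countP_eq, List.countP_cons]
        simp
      rw [h1, h2]
    have hlen_erase : ∀ a ∈ p.toFinset, (p.erase a).length = n := by
      intro a ha
      rw [List.length_erase_of_mem (List.mem_toFinset.1 ha), hp]
      omega
    have hterm : ∀ a ∈ p.toFinset,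
        (∑ w ∈ (p.erase a).permutations.toFinset, (Polynomial.X : Polynomial ℕ) ^ invCount (a :: w)) *
            ∏ i ∈ p.toFinset, qFact (p.count i)
          = (Polynomial.X ^ (p.countP (fun x => decide (x < a))) *
              ∑ j ∈ Finset.range (p.count a), Polynomial.X ^ j) * qFact n := by
      intro a ha
      have hap : a ∈ p := List.mem_toFinset.1 ha
      rw [hstep a ha, prod_qFact_erase p a hap, prod_count_erase_toFinset p a hap]
      have hih := ih (p.erase a) (hlen_erase a ha)
      rw [hlen_erase a ha] at hih
      rw [show Polynomial.X ^ (p.countP (fun x => decide (x < a))) *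
          (∑ w ∈ (p.erase a).permutations.toFinset, (Polynomial.X : Polynomial ℕ) ^ invCount w) *
          ((∑ j ∈ Finset.range (p.count a), Polynomial.X ^ j) *
            ∏ i ∈ (p.erase a).toFinset, qFact ((p.erase a).count i))
          = (Polynomial.X ^ (p.countP (fun x => decide (x < a))) *
              ∑ j ∈ Finset.range (p.count a), Polynomial.X ^ j) *
            ((∑ w ∈ (p.erase a).permutations.toFinset, (Polynomial.X : Polynomial ℕ) ^ invCount w) *
              ∏ i ∈ (p.erase a).toFinset, qFact ((p.erase a).count i)) from by ring, hih]
    rw [Finset.sum_mul, Finset.sum_congr rfl hterm, ← Finset.sum_mul, sum_X_interval p, hp, qFact_succ]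
    ring

/-- MacMahon: for a weakly increasing word `p` with entries in `{1,…,r}`, the value `i`
occurring `m i` times, the sum of `t^{inv w}` over all distinct rearrangements `w` of `p`
equals the t-multinomial `[n]_t!/([m 1]_t! ⋯ [m r]_t!)`, stated multiplicatively. -/
theorem sum_t_inv_eq_t_multinomial
    (p : List ℕ) (hsorted : p.Pairwise (· ≤ ·)) (hpos : ∀ x ∈ p, 0 < x)
    (r : ℕ) (m : ℕ → ℕ)
    (hcount : ∀ i, p.count i = if 1 ≤ i ∧ i ≤ r then m i else 0) :
    (∑ w ∈ p.permutations.toFinset, (Polynomial.X : Polynomial ℕ) ^ invCount w) *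
        ∏ i ∈ Finset.Icc 1 r, qFact (m i)
      = qFact p.length := by
  have hkey := key p.length p rfl
  have h1 : ∏ i ∈ Finset.Icc 1 r, qFact (m i) = ∏ i ∈ Finset.Icc 1 r, qFact (p.count i) := by
    apply Finset.prod_congr rfl
    intro i hi
    rw [Finset.mem_Icc] at hi
    rw [hcount i, if_pos hi]
  have hsub : p.toFinset ⊆ Finset.Icc 1 r := by
    intro i hi
    rw [List.mem_toFinset] at hi
    have hc := List.count_pos_iff.2 hi
    rw [hcount i] at hc
    rw [Finset.mem_Icc]
    by_contra h
    rw [if_neg h] at hc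
    omega
  have h2 : ∏ i ∈ Finset.Icc 1 r, qFact (p.count i) = ∏ i ∈ p.toFinset, qFact (p.count i) := by
    refine (Finset.prod_subset hsub ?_).symm
    intro i _ hi
    rw [List.mem_toFinset] at hi
    rw [List.count_eq_zero.2 hi]
    exact qFact.eq_1
  rw [h1, h2]
  exact hkey
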